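/- arXiv:math/0609558 — 3 statements merged into one kernel-verified Lean document; each statement's English description precedes it below -/
import Mathlib

section
/- The complex hyperbolic metric expressed in horospherical coordinates on the Siegel domain equals g = (df² + η₀²)/f² + |dW|²/f, where f = Re(zₙ) − (1/4)(|z₁|² + ⋯ + |z_{n−1}|²) and η₀ = dv + (1/2)Im(W̄ dW). -/
open Complex Finset

noncomputable section

/-- The Hermitian form of signature (n,1) on ℂ^{n+1}:
`⟨Z,Z'⟩ = 2(z̄₀z'ₙ + z̄ₙz'₀) + Σ_{k=1}^{n-1} z̄ₖ z'ₖ`. -/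
def herm (n : ℕ) (Z Z' : Fin (n + 1) → ℂ) : ℂ :=
  2 * ((starRingEnd ℂ) (Z 0) * Z' (Fin.last n) + (starRingEnd ℂ) (Z (Fin.last n)) * Z' 0) +
    ∑ k : Fin (n + 1), if k ≠ 0 ∧ k ≠ Fin.last n then (starRingEnd ℂ) (Z k) * Z' k else 0

/-- Defining function of the Siegel domain:
`f(z) = Re zₙ − (1/4) Σ_{k=1}^{n-1} |z_k|²` (here `z : Fin (m+1) → ℂ`, `zₙ = z (last)`,
`W = (z₀,…,z_{m-1})` the first `m` coordinates). -/
def fS (m : ℕ) (z : Fin (m + 1) → ℂ) : ℝ :=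
  (z (Fin.last m)).re - (1 / 4) * ∑ k : Fin m, Complex.normSq (z k.castSucc)

/-- The differential `df` evaluated on a tangent vector `V` at the point `z`. -/
def dfS (m : ℕ) (z V : Fin (m + 1) → ℂ) : ℝ :=
  (V (Fin.last m)).re - (1 / 2) * ∑ k : Fin m, ((starRingEnd ℂ) (z k.castSucc) * V k.castSucc).re

/-- The contact form `η₀ = dv + ½ Im(W̄ dW)` evaluated on `V` (horospherical `v = −Im zₙ`). -/
def eta0S (m : ℕ) (z V : Fin (m + 1) → ℂ) : ℝ :=
  -(V (Fin.last m)).im + (1 / 2) * ∑ k : Fin m, ((starRingEnd ℂ) (z k.castSucc) * V k.castSucc).im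

lemma herm_cons (m : ℕ) (a b : ℂ) (z z' : Fin (m + 1) → ℂ) :
    herm (m + 1) (Fin.cons a z) (Fin.cons b z')
      = 2 * ((starRingEnd ℂ) a * z' (Fin.last m) + (starRingEnd ℂ) (z (Fin.last m)) * b)
        + ∑ j : Fin m, (starRingEnd ℂ) (z j.castSucc) * z' j.castSucc := by
  unfold herm
  rw [show Fin.last (m + 1) = (Fin.last m).succ from (Fin.succ_last m).symm]
  simp only [Fin.cons_zero, Fin.cons_succ]
  congr 1
  rw [Fin.sum_univ_succ]
  have h0 : ¬((0 : Fin (m+2)) ≠ 0 ∧ (0 : Fin (m+2)) ≠ (Fin.last m).succ) := by simp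
  rw [if_neg h0, zero_add, Fin.sum_univ_castSucc]
  have hlast : ¬((Fin.last m).succ ≠ 0 ∧ (Fin.last m).succ ≠ (Fin.last m).succ) := by simp
  rw [if_neg hlast, add_zero]
  apply Finset.sum_congr rfl
  intro j _
  have h1 : (j.castSucc.succ : Fin (m+2)) ≠ 0 := Fin.succ_ne_zero _
  have h2 : (j.castSucc.succ : Fin (m+2)) ≠ (Fin.last m).succ := by
    rw [Ne, Fin.succ_inj]
    exact (Fin.castSucc_lt_last j).ne
  rw [if_pos ⟨h1, h2⟩, Fin.cons_succ, Fin.cons_succ]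

/-- In the affine chart `z₀ = −1` of the Siegel domain
(horospherical coordinates), the complex hyperbolic metric
`g^{CH}_Z(V,V) = 4(⟨Z,Z⟩⟨V,V⟩ − ⟨Z,V⟩⟨V,Z⟩)/(−⟨Z,Z⟩²)` equals
`(df(V)² + η₀(V)²)/f² + |dW(V)|²/f`. -/
theorem complexHyperbolic_metric_horospherical (m : ℕ) (z V : Fin (m + 1) → ℂ)
    (hf : 0 < fS m z) :
    (4 * (herm (m + 1) (Fin.cons (-1) z) (Fin.cons (-1) z)
            * herm (m + 1) (Fin.cons 0 V) (Fin.cons 0 V)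
          - herm (m + 1) (Fin.cons (-1) z) (Fin.cons 0 V)
            * herm (m + 1) (Fin.cons 0 V) (Fin.cons (-1) z))
        / (-(herm (m + 1) (Fin.cons (-1) z) (Fin.cons (-1) z)) ^ 2)).re
      = ((dfS m z V) ^ 2 + (eta0S m z V) ^ 2) / (fS m z) ^ 2
        + (∑ k : Fin m, Complex.normSq (V k.castSucc)) / fS m z := by
  have hne : fS m z ≠ 0 := ne_of_gt hf
  set S : ℂ := ∑ k : Fin m, (starRingEnd ℂ) (z k.castSucc) * V k.castSucc with hS
  set Q : ℝ := ∑ k : Fin m, Complex.normSq (V k.castSucc) with hQ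
  set B : ℂ := S - 2 * V (Fin.last m) with hBdef
  have hA : herm (m + 1) (Fin.cons (-1) z) (Fin.cons (-1) z) = ((-4 * fS m z : ℝ) : ℂ) := by
    rw [herm_cons]
    have hsum : ∑ j : Fin m, (starRingEnd ℂ) (z j.castSucc) * z j.castSucc
        = ((∑ k : Fin m, Complex.normSq (z k.castSucc) : ℝ) : ℂ) := by
      rw [Complex.ofReal_sum]
      exact Finset.sum_congr rfl fun j _ => (Complex.normSq_eq_conj_mul_self (z := z j.castSucc)).symm
    rw [hsum]
    simp only [fS]
    rw [Complex.ext_iff]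
    constructor <;>
      simp [Complex.add_re, Complex.add_im, Complex.mul_re, Complex.mul_im, Complex.sub_re] <;>
      ring
  have hB : herm (m + 1) (Fin.cons (-1) z) (Fin.cons 0 V) = B := by
    rw [herm_cons, hBdef, hS, map_neg, map_one]
    ring
  have hC : herm (m + 1) (Fin.cons 0 V) (Fin.cons (-1) z) = (starRingEnd ℂ) B := by
    have hconj : (starRingEnd ℂ) B
        = ∑ j : Fin m, (starRingEnd ℂ) (V j.castSucc) * z j.castSucc
          - 2 * (starRingEnd ℂ) (V (Fin.last m)) := by
      rw [hBdef, map_sub, map_mul, map_ofNat, hS, map_sum]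
      congr 1
      exact Finset.sum_congr rfl fun j _ => by rw [map_mul, Complex.conj_conj]; ring
    rw [herm_cons, hconj, map_zero]
    ring
  have hD : herm (m + 1) (Fin.cons 0 V) (Fin.cons 0 V) = ((Q : ℝ) : ℂ) := by
    rw [herm_cons, hQ, Complex.ofReal_sum, map_zero]
    rw [Finset.sum_congr rfl fun j _ => (Complex.normSq_eq_conj_mul_self (z := V j.castSucc)).symm]
    ring
  rw [hA, hB, hC, hD, Complex.mul_conj]
  have hnB : Complex.normSq B = 4 * ((dfS m z V) ^ 2 + (eta0S m z V) ^ 2) := by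
    rw [Complex.normSq_apply, hBdef]
    simp only [dfS, eta0S, Complex.sub_re, Complex.sub_im, Complex.mul_re, Complex.mul_im,
      Complex.re_sum, Complex.im_sum, hS, Complex.re_ofNat, Complex.im_ofNat]
    ring
  have key : (4 * (((-4 * fS m z : ℝ) : ℂ) * ((Q : ℝ) : ℂ) - ((Complex.normSq B : ℝ) : ℂ))
      / (-((-4 * fS m z : ℝ) : ℂ) ^ 2))
      = (((4 * ((-4 * fS m z) * Q - Complex.normSq B) / (-(-4 * fS m z) ^ 2) : ℝ)) : ℂ) := by
    push_cast
    ring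
  rw [key, Complex.ofReal_re, hnB]
  field_simp
  ring
end
end

section
/- The conversion K_λ: [z₀:⋯:zₙ] ↦ [z̄ₙ/λ : z̄₁ : ⋯ : z̄_{n−1} : λz̄₀] is an isometric involution of CHⁿ that preserves D_λ and exchanges B_λ⁺ and B_λ⁻, and it is antiholomorphic. -/
open Complex Finset

noncomputable section

/-- The conversion `K_λ : [z₀:⋯:zₙ] ↦ [z̄ₙ/λ : z̄₁ : ⋯ : z̄_{n−1} : λz̄₀]`. -/
def Kconv (n : ℕ) (lam : ℝ) (Z : Fin (n + 1) → ℂ) : Fin (n + 1) → ℂ :=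
  fun k => if k = 0 then (starRingEnd ℂ) (Z (Fin.last n)) / (lam : ℂ)
    else if k = Fin.last n then (lam : ℂ) * (starRingEnd ℂ) (Z 0)
    else (starRingEnd ℂ) (Z k)

lemma last_ne_zero' (n : ℕ) (hn : 1 ≤ n) : Fin.last n ≠ 0 := by
  simp [Fin.ext_iff]; omega

lemma Kconv_zero (n : ℕ) (lam : ℝ) (Z : Fin (n + 1) → ℂ) :
    Kconv n lam Z 0 = (starRingEnd ℂ) (Z (Fin.last n)) / (lam : ℂ) := if_pos rfl

lemma Kconv_last (n : ℕ) (hn : 1 ≤ n) (lam : ℝ) (Z : Fin (n + 1) → ℂ) :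
    Kconv n lam Z (Fin.last n) = (lam : ℂ) * (starRingEnd ℂ) (Z 0) := by
  simp [Kconv, last_ne_zero' n hn]

lemma Kconv_mid (n : ℕ) (lam : ℝ) (Z : Fin (n + 1) → ℂ) (k : Fin (n + 1))
    (h0 : k ≠ 0) (hl : k ≠ Fin.last n) : Kconv n lam Z k = (starRingEnd ℂ) (Z k) := by
  simp [Kconv, h0, hl]

/-- The conversion `K_λ` is an isometric involution of CHⁿ (it preserves the
Hermitian form up to complex conjugation), it is antiholomorphic (conjugate-linear on
homogeneous coordinates), preserves `D_λ = {λ|z₀| = |zₙ|}` and exchanges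
`B_λ⁺ = {λ|z₀| > |zₙ|}` and `B_λ⁻ = {λ|z₀| < |zₙ|}`. -/
theorem Kconv_properties (n : ℕ) (hn : 1 ≤ n) (lam : ℝ) (hlam : 0 < lam) :
    (∀ Z Z' : Fin (n + 1) → ℂ,
        herm n (Kconv n lam Z) (Kconv n lam Z') = (starRingEnd ℂ) (herm n Z Z')) ∧
    (∀ Z : Fin (n + 1) → ℂ, Kconv n lam (Kconv n lam Z) = Z) ∧
    (∀ (c : ℂ) (Z : Fin (n + 1) → ℂ),
        Kconv n lam (c • Z) = (starRingEnd ℂ) c • Kconv n lam Z) ∧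
    (Kconv n lam '' {Z : Fin (n + 1) → ℂ | (herm n Z Z).re < 0 ∧
        lam * ‖Z 0‖ = ‖Z (Fin.last n)‖}
      = {Z : Fin (n + 1) → ℂ | (herm n Z Z).re < 0 ∧
        lam * ‖Z 0‖ = ‖Z (Fin.last n)‖}) ∧
    (Kconv n lam '' {Z : Fin (n + 1) → ℂ | (herm n Z Z).re < 0 ∧
        lam * ‖Z 0‖ > ‖Z (Fin.last n)‖}
      = {Z : Fin (n + 1) → ℂ | (herm n Z Z).re < 0 ∧
        lam * ‖Z 0‖ < ‖Z (Fin.last n)‖}) := by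
  have hlamC : (lam : ℂ) ≠ 0 := by exact_mod_cast hlam.ne'
  have hiso : ∀ Z Z' : Fin (n + 1) → ℂ,
      herm n (Kconv n lam Z) (Kconv n lam Z') = (starRingEnd ℂ) (herm n Z Z') := by
    intro Z Z'
    have hsum : (∑ k : Fin (n + 1), if k ≠ 0 ∧ k ≠ Fin.last n then
          (starRingEnd ℂ) (Kconv n lam Z k) * Kconv n lam Z' k else 0)
        = ∑ k : Fin (n + 1), (starRingEnd ℂ)
          (if k ≠ 0 ∧ k ≠ Fin.last n then (starRingEnd ℂ) (Z k) * Z' k else 0) := by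
      refine Finset.sum_congr rfl fun k _ => ?_
      by_cases h : k ≠ 0 ∧ k ≠ Fin.last n
      · simp [h, Kconv_mid n lam Z k h.1 h.2, Kconv_mid n lam Z' k h.1 h.2, mul_comm]
      · simp [h]
    unfold herm
    rw [hsum, ← map_sum, Kconv_zero, Kconv_zero, Kconv_last n hn, Kconv_last n hn]
    simp only [map_add, map_mul, map_div₀, map_ofNat, Complex.conj_conj, Complex.conj_ofReal]
    field_simp
    ring
  have hinv : ∀ Z : Fin (n + 1) → ℂ, Kconv n lam (Kconv n lam Z) = Z := by
    intro Z
    funext k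
    by_cases h0 : k = 0
    · subst h0
      rw [Kconv_zero, Kconv_last n hn]
      simp [map_mul, Complex.conj_ofReal]
      field_simp
    · by_cases hl : k = Fin.last n
      · subst hl
        rw [Kconv_last n hn, Kconv_zero]
        simp [map_div₀, Complex.conj_ofReal]
        field_simp
      · rw [Kconv_mid n lam _ k h0 hl, Kconv_mid n lam Z k h0 hl, Complex.conj_conj]
  have habs0 : ∀ Z : Fin (n + 1) → ℂ,
      ‖Kconv n lam Z 0‖ = ‖Z (Fin.last n)‖ / lam := by
    intro Z
    rw [Kconv_zero]
    simp [map_div₀, abs_of_pos hlam]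
  have habsl : ∀ Z : Fin (n + 1) → ℂ,
      ‖Kconv n lam Z (Fin.last n)‖ = lam * ‖Z 0‖ := by
    intro Z
    rw [Kconv_last n hn]
    simp [map_mul, abs_of_pos hlam]
  have hre : ∀ Z : Fin (n + 1) → ℂ,
      (herm n (Kconv n lam Z) (Kconv n lam Z)).re = (herm n Z Z).re := by
    intro Z; rw [hiso]; exact Complex.conj_re _
  refine ⟨hiso, hinv, ?_, ?_, ?_⟩
  · intro c Z
    funext k
    by_cases h0 : k = 0
    · subst h0
      simp [Kconv_zero, Pi.smul_apply, smul_eq_mul, map_mul, mul_div_assoc]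
    · by_cases hl : k = Fin.last n
      · subst hl
        simp [Kconv_last n hn, Pi.smul_apply, smul_eq_mul, map_mul]; ring
      · simp [Kconv_mid n lam _ k h0 hl, Kconv_mid, h0, hl, Pi.smul_apply, smul_eq_mul,
          map_mul, Kconv]
  · ext W
    simp only [Set.mem_image, Set.mem_setOf_eq]
    constructor
    · rintro ⟨Z, ⟨hre', heq⟩, rfl⟩
      refine ⟨by rw [hre]; exact hre', ?_⟩
      rw [habs0, habsl]
      field_simp
      linarith
    · intro hW
      refine ⟨Kconv n lam W, ⟨by rw [hre]; exact hW.1, ?_⟩, hinv W⟩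
      rw [habs0, habsl]
      field_simp
      linarith [hW.2]
  · ext W
    simp only [Set.mem_image, Set.mem_setOf_eq]
    constructor
    · rintro ⟨Z, ⟨hre', hgt⟩, rfl⟩
      refine ⟨by rw [hre]; exact hre', ?_⟩
      rw [habs0, habsl, mul_div_cancel₀ _ hlam.ne']
      exact hgt
    · intro hW
      refine ⟨Kconv n lam W, ⟨by rw [hre]; exact hW.1, ?_⟩, hinv W⟩
      rw [habs0, habsl, mul_div_cancel₀ _ hlam.ne']
      exact hW.2
end
end

section
/- In horospherical coordinates (u, v, W) on CHⁿ, the inversion I₁ pulls back the horospherical height function u to I₁*u = u / ((u + |W|²/4)² + v²). In particular the fixed hypersurface D₁ = ∂B₁⁺ is given by the equation (u + |W|²/4)² + v² = 1, and I₁⁻¹(D_λ) = D_{1/λ}. -/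
open Complex Finset

noncomputable section

/-- Horospherical coordinate `v = −Im zₙ` (so that `f + iv = z̄ₙ − (1/4)|W|²`). -/
def vS (m : ℕ) (z : Fin (m + 1) → ℂ) : ℝ := -(z (Fin.last m)).im

/-- The inversion `I₁` written in the affine chart `z₀ = −1`:
`(z₁,…,z_{n−1},zₙ) ↦ (−z₁/zₙ, …, −z_{n−1}/zₙ, 1/zₙ)`. -/
def I1c (m : ℕ) (z : Fin (m + 1) → ℂ) : Fin (m + 1) → ℂ :=
  fun k => if k = Fin.last m then 1 / z (Fin.last m) else -(z k) / z (Fin.last m)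

/-- In horospherical coordinates `(u,v,W)`, the inversion `I₁` pulls back
`u` to `u/((u + |W|²/4)² + v²)`; the hypersurface `D₁` is given by
`(u + |W|²/4)² + v² = 1` (i.e. `|zₙ| = 1` in the chart `z₀ = −1`), and
`I₁⁻¹(D_λ) = D_{1/λ}`. -/
theorem I1_horospherical (m : ℕ) (z : Fin (m + 1) → ℂ) (hz : z (Fin.last m) ≠ 0) :
    (fS m (I1c m z) = fS m z /
      ((fS m z + (1 / 4) * ∑ k : Fin m, Complex.normSq (z k.castSucc)) ^ 2 + (vS m z) ^ 2)) ∧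
    (‖z (Fin.last m)‖ = 1 ↔
      (fS m z + (1 / 4) * ∑ k : Fin m, Complex.normSq (z k.castSucc)) ^ 2 + (vS m z) ^ 2 = 1) ∧
    (∀ lam : ℝ, 0 < lam →
      (‖(I1c m z) (Fin.last m)‖ = lam ↔
        ‖z (Fin.last m)‖ = 1 / lam)) := by
  have hns : Complex.normSq (z (Fin.last m)) ≠ 0 := fun h => hz (Complex.normSq_eq_zero.mp h)
  have hden : (fS m z + (1 / 4) * ∑ k : Fin m, Complex.normSq (z k.castSucc)) ^ 2 + (vS m z) ^ 2
      = Complex.normSq (z (Fin.last m)) := by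
    simp [fS, vS, Complex.normSq_apply]; ring
  refine ⟨?_, ?_, ?_⟩
  · have h1 : fS m (I1c m z) = fS m z / Complex.normSq (z (Fin.last m)) := by
      unfold fS I1c
      rw [if_pos rfl]
      have hsum : ∀ k : Fin m, Complex.normSq
          (if k.castSucc = Fin.last m then 1 / z (Fin.last m)
            else -(z k.castSucc) / z (Fin.last m))
          = Complex.normSq (z k.castSucc) / Complex.normSq (z (Fin.last m)) := by
        intro k
        rw [if_neg (Fin.castSucc_lt_last k).ne, map_div₀, Complex.normSq_neg]
      rw [Finset.sum_congr rfl fun k _ => hsum k, ← Finset.sum_div, one_div, Complex.inv_re]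
      field_simp
    rw [h1, hden]
  · rw [hden, ← Complex.sq_norm]
    constructor
    · intro h; rw [h]; norm_num
    · intro h
      nlinarith [norm_nonneg (z (Fin.last m))]
  · intro lam hlam
    have hI : (I1c m z) (Fin.last m) = (z (Fin.last m))⁻¹ := by simp [I1c]
    rw [hI, norm_inv, inv_eq_iff_eq_inv, one_div]
end
end
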